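/- Let d ≥ 1 and let Γ be an additive sub-semigroup of ℕ^{d+1} that generates ℤ^{d+1} as a group. Let D be a compact convex subset of ℝ^d contained in the interior of Δ(Γ). Then there exists m₀ > 0 such that for every integer m > m₀ one has D ∩ Λ_m(Γ) = D ∩ (1/m)ℤ^d; equivalently, every point α ∈ D with mα ∈ ℤ^d satisfies (mα, m) ∈ Γ. -/

import Mathlib

/-- The image of a vector of natural numbers in `ℝ^n`. -/
def natVecR {n : ℕ} (γ : Fin n → ℕ) : Fin n → ℝ := fun i => (γ i : ℝ)

/-- `Σ(Γ)`: the closed convex cone generated by `Γ ⊆ ℕ^n` in `ℝ^n`, i.e. the topological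
closure of the set of all finite nonnegative real linear combinations of elements of `Γ`. -/
def coneOf {n : ℕ} (Γ : Set (Fin n → ℕ)) : Set (Fin n → ℝ) :=
  closure { x | ∃ (k : ℕ) (c : Fin k → ℝ) (g : Fin k → (Fin n → ℕ)),
    (∀ i, 0 ≤ c i) ∧ (∀ i, g i ∈ Γ) ∧ x = ∑ i, c i • natVecR (g i) }

/-- `Δ(Γ) = {x ∈ ℝ^d : (x,1) ∈ Σ(Γ)}`. -/
def deltaOf {d : ℕ} (Γ : Set (Fin (d+1) → ℕ)) : Set (Fin d → ℝ) :=
  { x | Fin.snoc x (1 : ℝ) ∈ coneOf Γ }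

/-- `Λ_m(Γ) = {x ∈ ℝ^d : mx ∈ ℕ^d and (mx, m) ∈ Γ}`. -/
def lambdaOf {d : ℕ} (Γ : Set (Fin (d+1) → ℕ)) (m : ℕ) : Set (Fin d → ℝ) :=
  { x | ∃ β : Fin d → ℕ, (x = fun i => (β i : ℝ) / (m : ℝ)) ∧ Fin.snoc β m ∈ Γ }

namespace KhAux

def intVec {n : ℕ} (γ : Fin n → ℕ) : Fin n → ℤ := fun i => (γ i : ℤ)

lemma intVec_injective {n : ℕ} : Function.Injective (intVec (n := n)) := by
  intro a b h
  funext i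
  exact Nat.cast_injective (congrFun h i)

def wcone {n : ℕ} (S : Finset (Fin n → ℕ)) : Set (Fin n → ℝ) :=
  {x | ∃ c : (Fin n → ℕ) → ℝ, (∀ γ, 0 ≤ c γ) ∧ x = ∑ γ ∈ S, c γ • natVecR γ}

def wall {n : ℕ} (Γ : Set (Fin n → ℕ)) : Set (Fin n → ℝ) :=
  { x | ∃ (k : ℕ) (c : Fin k → ℝ) (g : Fin k → (Fin n → ℕ)),
    (∀ i, 0 ≤ c i) ∧ (∀ i, g i ∈ Γ) ∧ x = ∑ i, c i • natVecR (g i) }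

lemma coneOf_eq_closure_wall {n : ℕ} (Γ : Set (Fin n → ℕ)) :
    coneOf Γ = closure (wall Γ) := rfl

lemma zero_mem_wcone {n : ℕ} (S : Finset (Fin n → ℕ)) : (0 : Fin n → ℝ) ∈ wcone S :=
  ⟨0, fun _ => le_rfl, by simp⟩

lemma wcone_mono {n : ℕ} {S S' : Finset (Fin n → ℕ)} (h : S ⊆ S') : wcone S ⊆ wcone S' := by
  classical
  rintro x ⟨c, hc, rfl⟩
  refine ⟨fun γ => if γ ∈ S then c γ else 0, fun γ => by dsimp only; split <;> [exact hc γ; exact le_rfl], ?_⟩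
  rw [← Finset.sum_subset h (fun γ _ hγ => by simp [hγ])]
  exact Finset.sum_congr rfl fun γ hγ => by simp [hγ]

lemma wcone_add {n : ℕ} {S : Finset (Fin n → ℕ)} {x y : Fin n → ℝ}
    (hx : x ∈ wcone S) (hy : y ∈ wcone S) : x + y ∈ wcone S := by
  obtain ⟨c, hc, rfl⟩ := hx; obtain ⟨c', hc', rfl⟩ := hy
  refine ⟨c + c', fun γ => add_nonneg (hc γ) (hc' γ), ?_⟩
  rw [← Finset.sum_add_distrib]
  exact Finset.sum_congr rfl fun γ _ => by simp [add_smul]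

lemma wcone_smul {n : ℕ} {S : Finset (Fin n → ℕ)} {t : ℝ} (ht : 0 ≤ t) {x : Fin n → ℝ}
    (hx : x ∈ wcone S) : t • x ∈ wcone S := by
  obtain ⟨c, hc, rfl⟩ := hx
  refine ⟨fun γ => t * c γ, fun γ => mul_nonneg ht (hc γ), ?_⟩
  rw [Finset.smul_sum]
  exact Finset.sum_congr rfl fun γ _ => smul_smul t (c γ) _

lemma mem_wall_iff {n : ℕ} {Γ : Set (Fin n → ℕ)} {x : Fin n → ℝ} :
    x ∈ wall Γ ↔ ∃ S : Finset (Fin n → ℕ), ↑S ⊆ Γ ∧ x ∈ wcone S := by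
  classical
  constructor
  · rintro ⟨k, c, g, hc, hg, rfl⟩
    refine ⟨Finset.image g Finset.univ, ?_, ?_⟩
    · intro γ hγ
      obtain ⟨i, _, rfl⟩ := Finset.mem_image.1 (by exact_mod_cast hγ)
      exact hg i
    · refine ⟨fun γ => ∑ i ∈ Finset.univ.filter (fun i => g i = γ), c i,
        fun γ => Finset.sum_nonneg fun i _ => hc i, ?_⟩
      rw [Finset.sum_image' (fun i => c i • natVecR (g i))]
      intro i _
      rw [Finset.sum_smul]
      exact Finset.sum_congr rfl fun j hj => by
        rw [(Finset.mem_filter.1 hj).2]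
  · rintro ⟨S, hS, c, hc, rfl⟩
    refine ⟨S.card, fun i => c (S.equivFin.symm i), fun i => (S.equivFin.symm i : Fin n → ℕ),
      fun i => hc _, fun i => hS (S.equivFin.symm i).2, ?_⟩
    rw [← Finset.sum_coe_sort S (fun γ => c γ • natVecR γ)]
    exact (Equiv.sum_comp S.equivFin.symm (fun a : S => c (a : Fin n → ℕ) • natVecR (a : Fin n → ℕ))).symm

lemma zero_mem_wall {n : ℕ} {Γ : Set (Fin n → ℕ)} : (0 : Fin n → ℝ) ∈ wall Γ :=
  mem_wall_iff.2 ⟨∅, by simp, zero_mem_wcone ∅⟩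

lemma wall_convex {n : ℕ} {Γ : Set (Fin n → ℕ)} : Convex ℝ (wall Γ) := by
  intro x hx y hy a b ha hb hab
  obtain ⟨S₁, hS₁, hx⟩ := mem_wall_iff.1 hx
  obtain ⟨S₂, hS₂, hy⟩ := mem_wall_iff.1 hy
  refine mem_wall_iff.2 ⟨S₁ ∪ S₂, ?_, ?_⟩
  · intro γ hγ
    rcases Finset.mem_union.1 (by exact_mod_cast hγ) with h | h
    · exact hS₁ h
    · exact hS₂ h
  · exact wcone_add (wcone_smul ha (wcone_mono Finset.subset_union_left hx))
      (wcone_smul hb (wcone_mono Finset.subset_union_right hy))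

lemma smul_mem_closure_wall {n : ℕ} {Γ : Set (Fin n → ℕ)} {t : ℝ} (ht : 0 ≤ t)
    {v : Fin n → ℝ} (hv : v ∈ closure (wall Γ)) : t • v ∈ closure (wall Γ) := by
  have h1 : (t • ·) '' closure (wall Γ) ⊆ closure ((t • ·) '' wall Γ) :=
    image_closure_subset_closure_image (continuous_const_smul t)
  have h2 : (t • ·) '' wall Γ ⊆ wall Γ := by
    rintro _ ⟨w, hw, rfl⟩
    obtain ⟨S, hS, hw⟩ := mem_wall_iff.1 hw
    exact mem_wall_iff.2 ⟨S, hS, wcone_smul ht hw⟩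
  exact closure_mono h2 (h1 ⟨v, hv, rfl⟩)


lemma mem_interior_wall {n : ℕ} {Γ : Set (Fin n → ℕ)} {z : Fin n → ℝ}
    (hz : z ∈ interior (closure (wall Γ))) : z ∈ interior (wall Γ) := by
  classical
  obtain ⟨r, hr, hball⟩ := Metric.isOpen_iff.1 isOpen_interior z hz
  have hballc : Metric.ball z r ⊆ closure (wall Γ) := hball.trans interior_subset
  -- the real span of the wall is everything
  have hspan : Submodule.span ℝ (wall Γ) = ⊤ := by
    have hcl : closure (wall Γ) ⊆ (Submodule.span ℝ (wall Γ) : Set (Fin n → ℝ)) :=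
      closure_minimal Submodule.subset_span (Submodule.closed_of_finiteDimensional _)
    have he : ∀ i : Fin n, Pi.single i (1 : ℝ) ∈ Submodule.span ℝ (wall Γ) := by
      intro i
      have h1 : z ∈ Submodule.span ℝ (wall Γ) := hcl (hballc (Metric.mem_ball_self hr))
      have hmem : z + (r / 2) • (Pi.single i (1 : ℝ) : Fin n → ℝ) ∈ Metric.ball z r := by
        rw [Metric.mem_ball, dist_eq_norm, add_sub_cancel_left, norm_smul]
        have h2 : ‖(Pi.single i (1 : ℝ) : Fin n → ℝ)‖ ≤ 1 := by
          refine (pi_norm_le_iff_of_nonneg zero_le_one).2 fun j => ?_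
          rw [Pi.single_apply]
          split <;> simp
        calc ‖(r / 2 : ℝ)‖ * ‖(Pi.single i (1:ℝ) : Fin n → ℝ)‖ ≤ (r/2) * 1 := by
              apply mul_le_mul _ h2 (norm_nonneg _) (by linarith)
              rw [Real.norm_eq_abs, abs_of_nonneg (by linarith)]
          _ < r := by linarith
      have h2 : z + (r / 2) • (Pi.single i (1 : ℝ) : Fin n → ℝ) ∈ Submodule.span ℝ (wall Γ) :=
        hcl (hballc hmem)
      have h3 : (r / 2) • (Pi.single i (1 : ℝ) : Fin n → ℝ) ∈ Submodule.span ℝ (wall Γ) := by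
        have := Submodule.sub_mem _ h2 h1
        simpa using this
      have h4 := Submodule.smul_mem _ (2 / r : ℝ) h3
      rwa [smul_smul, div_mul_div_comm, mul_comm, div_self (by positivity), one_smul] at h4
    rw [eq_top_iff]
    intro v _
    have hv : v = ∑ i, v i • (Pi.single i (1 : ℝ) : Fin n → ℝ) := by
      funext j
      simp only [Finset.sum_apply, Pi.smul_apply, Pi.single_apply, smul_eq_mul]
      rw [Finset.sum_eq_single j] <;> simp +contextual [eq_comm]
    rw [hv]
    exact Submodule.sum_mem _ fun i _ => Submodule.smul_mem _ _ (he i)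
  -- interior of the wall is nonempty
  have hconv : Convex ℝ (wall Γ) := wall_convex
  have haff : affineSpan ℝ (wall Γ) = ⊤ := by
    rw [AffineSubspace.affineSpan_eq_top_iff_vectorSpan_eq_top_of_nonempty ℝ (Fin n → ℝ) (Fin n → ℝ) (s := wall Γ) ⟨0, zero_mem_wall⟩]
    rw [eq_top_iff, ← hspan, Submodule.span_le]
    intro v hv
    have : v -ᵥ 0 ∈ vectorSpan ℝ (wall Γ) := vsub_mem_vectorSpan ℝ hv zero_mem_wall
    simpa using this
  have hne : (interior (wall Γ)).Nonempty := by
    have := interior_convexHull_nonempty_iff_affineSpan_eq_top.2 haff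
    rwa [hconv.convexHull_eq] at this
  obtain ⟨w, hw⟩ := hne
  -- z lies on the open segment from w to a point of the closure slightly beyond z
  set t : ℝ := r / (2 * (‖z - w‖ + 1)) with htdef
  have htpos : 0 < t := by positivity
  set z' : Fin n → ℝ := z + t • (z - w) with hz'def
  have hz' : z' ∈ closure (wall Γ) := by
    apply hballc
    rw [Metric.mem_ball, dist_eq_norm, hz'def, add_sub_cancel_left, norm_smul,
      Real.norm_eq_abs, abs_of_pos htpos]
    have h1 : t * ‖z - w‖ < t * (‖z - w‖ + 1) := by
      apply mul_lt_mul_of_pos_left (by linarith) htpos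
    have h2 : t * (‖z - w‖ + 1) = r / 2 := by
      rw [htdef]; field_simp
    linarith
  have hseg : z ∈ openSegment ℝ w z' := by
    refine ⟨t / (1 + t), 1 / (1 + t), by positivity, by positivity, ?_, ?_⟩
    · field_simp; ring
    · funext j
      simp only [hz'def, Pi.add_apply, Pi.smul_apply, Pi.sub_apply, smul_eq_mul]
      field_simp
      ring
  exact hconv.openSegment_interior_closure_subset_interior hw hz' hseg

lemma exists_wcone_ball {n : ℕ} {Γ : Set (Fin n → ℕ)} {z : Fin n → ℝ}
    (hz : z ∈ interior (wall Γ)) :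
    ∃ S : Finset (Fin n → ℕ), ↑S ⊆ Γ ∧ ∃ ρ : ℝ, 0 < ρ ∧ Metric.ball z ρ ⊆ wcone S := by
  classical
  obtain ⟨r, hr, hball⟩ := Metric.isOpen_iff.1 isOpen_interior z hz
  have hballW : Metric.ball z r ⊆ wall Γ := hball.trans interior_subset
  set s : ℝ := r / 2 with hsdef
  have hs : 0 < s := by positivity
  have hzW : z ∈ wall Γ := hballW (Metric.mem_ball_self hr)
  have hsingle : ∀ i : Fin n, ‖(Pi.single i (1 : ℝ) : Fin n → ℝ)‖ ≤ 1 := by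
    intro i
    refine (pi_norm_le_iff_of_nonneg zero_le_one).2 fun j => ?_
    rw [Pi.single_apply]
    split <;> simp
  have hq : ∀ (i : Fin n) (ε : Bool),
      z + (if ε then s else -s) • (Pi.single i (1 : ℝ) : Fin n → ℝ) ∈ wall Γ := by
    intro i ε
    apply hballW
    rw [Metric.mem_ball, dist_eq_norm, add_sub_cancel_left, norm_smul, Real.norm_eq_abs]
    have habs : |if ε then s else -s| = s := by cases ε <;> simp [abs_of_pos hs]
    calc |if ε then s else -s| * ‖(Pi.single i (1:ℝ) : Fin n → ℝ)‖ ≤ s * 1 := by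
          rw [habs]; exact mul_le_mul_of_nonneg_left (hsingle i) hs.le
      _ < r := by rw [hsdef]; linarith
  have hpt : ∀ w ∈ wall Γ, ∃ S : Finset (Fin n → ℕ), ↑S ⊆ Γ ∧ w ∈ wcone S :=
    fun w hw => mem_wall_iff.1 hw
  choose! S0 hS0Γ hS0 using hpt
  set S : Finset (Fin n → ℕ) :=
    S0 z ∪ Finset.univ.biUnion (fun p : Fin n × Bool =>
      S0 (z + (if p.2 then s else -s) • (Pi.single p.1 (1 : ℝ) : Fin n → ℝ))) with hSdef
  have hSΓ : ↑S ⊆ Γ := by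
    intro γ hγ
    rcases Finset.mem_union.1 (by exact_mod_cast hγ) with h | h
    · exact hS0Γ z hzW h
    · obtain ⟨p, _, hp⟩ := Finset.mem_biUnion.1 h
      exact hS0Γ _ (hq p.1 p.2) hp
  have hzS : z ∈ wcone S := wcone_mono Finset.subset_union_left (hS0 z hzW)
  have hvS : ∀ (i : Fin n) (ε : Bool),
      z + (if ε then s else -s) • (Pi.single i (1 : ℝ) : Fin n → ℝ) ∈ wcone S := by
    intro i ε
    refine wcone_mono ?_ (hS0 _ (hq i ε))
    refine (Finset.subset_biUnion_of_mem (fun p : Fin n × Bool =>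
      S0 (z + (if p.2 then s else -s) • (Pi.single p.1 (1 : ℝ) : Fin n → ℝ)))
      (Finset.mem_univ (i, ε))).trans Finset.subset_union_right
  refine ⟨S, hSΓ, s / (n + 1), by positivity, ?_⟩
  intro y hy
  set h : Fin n → ℝ := y - z with hhdef
  have hhi : ∀ i, |h i| < s / (n + 1) := by
    intro i
    have h1 : dist (y i) (z i) ≤ dist y z := dist_le_pi_dist y z i
    have h2 : dist y z < s / (n+1) := Metric.mem_ball.1 hy
    rw [Real.dist_eq] at h1
    exact lt_of_le_of_lt h1 h2
  have hsumabs : ∑ i, |h i| < s := by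
    have h1 : ∑ i, |h i| ≤ ∑ _i : Fin n, s / (n+1) :=
      Finset.sum_le_sum fun i _ => (hhi i).le
    have h2 : ∑ _i : Fin n, s / (n+1) = n * (s / (n+1)) := by
      rw [Finset.sum_const]; simp [mul_comm]
    have h3 : (n : ℝ) * (s / (n+1)) < s := by
      rw [mul_div_assoc']
      rw [div_lt_iff₀ (by positivity)]
      nlinarith
    linarith
  set lam : Fin n → ℝ := fun i => |h i| / s with hlamdef
  set Lam : ℝ := ∑ i, lam i with hLamdef
  have hlam0 : ∀ i, 0 ≤ lam i := fun i => by positivity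
  have hLam1 : Lam < 1 := by
    rw [hLamdef, hlamdef, ← Finset.sum_div, div_lt_one hs]
    exact hsumabs
  have hLam0 : 0 ≤ Lam := Finset.sum_nonneg fun i _ => hlam0 i
  set sgn : Fin n → ℝ := fun i => if 0 ≤ h i then s else -s with hsgndef
  have hveq : y = (1 - Lam) • z +
      ∑ i, lam i • (z + sgn i • (Pi.single i (1 : ℝ) : Fin n → ℝ)) := by
    funext j
    simp only [Pi.add_apply, Pi.smul_apply, Finset.sum_apply, smul_eq_mul, Pi.single_apply]
    have hterm : ∀ i, lam i * (z j + sgn i * (if j = i then (1:ℝ) else 0)) =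
        lam i * z j + (if j = i then lam i * sgn i else 0) := by
      intro i
      split <;> ring
    rw [Finset.sum_congr rfl fun i _ => hterm i, Finset.sum_add_distrib,
      Finset.sum_ite_eq Finset.univ j (fun i => lam i * sgn i)]
    simp only [Finset.mem_univ, if_true, ← Finset.sum_mul]
    have hlj : lam j * sgn j = h j := by
      rw [hlamdef, hsgndef]
      dsimp only
      split
      · rw [div_mul_cancel₀ _ hs.ne', abs_of_nonneg ‹_›]
      · rw [mul_neg, div_mul_cancel₀ _ hs.ne', abs_of_neg (lt_of_not_ge ‹_›)]; ring
    rw [← hLamdef, hlj]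
    have : h j = y j - z j := rfl
    linarith [this]
  rw [hveq]
  apply wcone_add (wcone_smul (by linarith) hzS)
  apply Finset.sum_induction _ (· ∈ wcone S) (fun a b ha hb => wcone_add ha hb)
    (zero_mem_wcone S)
  intro i _
  apply wcone_smul (hlam0 i)
  have : sgn i = if (0 ≤ h i : Bool) then s else -s := by
    rw [hsgndef]; dsimp only; by_cases h0 : 0 ≤ h i <;> simp [h0]
  rw [this]
  exact hvS i _

lemma nsmul_mem {n : ℕ} {Γ : Set (Fin n → ℕ)} (h0 : (0 : Fin n → ℕ) ∈ Γ)
    (hadd : ∀ x ∈ Γ, ∀ y ∈ Γ, x + y ∈ Γ) {γ : Fin n → ℕ} (hγ : γ ∈ Γ) (a : ℕ) :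
    a • γ ∈ Γ := by
  induction a with
  | zero => simpa using h0
  | succ k ih => rw [succ_nsmul]; exact hadd _ ih _ hγ

lemma key {n : ℕ} (Γ : Set (Fin n → ℕ)) (h0 : (0 : Fin n → ℕ) ∈ Γ)
    (hadd : ∀ x ∈ Γ, ∀ y ∈ Γ, x + y ∈ Γ) (S : Finset (Fin n → ℕ)) (hSΓ : ↑S ⊆ Γ)
    (hspan : ∀ v : Fin n → ℤ, ∃ b : (Fin n → ℕ) → ℤ, ∀ j, v j = ∑ γ ∈ S, b γ * (γ j : ℤ)) :
    ∃ T : ℕ, ∀ (u : Fin n → ℕ) (c : (Fin n → ℕ) → ℝ),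
      (∀ γ ∈ S, (T : ℝ) ≤ c γ) → (∀ j, (u j : ℝ) = ∑ γ ∈ S, c γ * (γ j : ℝ)) → u ∈ Γ := by
  classical
  choose b hb using hspan
  set M : Fin n → ℕ := fun j => ∑ γ ∈ S, γ j with hM
  have hBox : (Set.univ.pi fun j : Fin n => Set.Icc (0:ℤ) (M j)).Finite :=
    Set.Finite.pi fun j => Set.finite_Icc _ _
  set T : ℕ := hBox.toFinset.sup fun v => S.sup fun γ => (-(b v γ)).toNat with hT
  refine ⟨T, ?_⟩
  intro u c hc hu
  have hc0 : ∀ γ ∈ S, (0:ℝ) ≤ c γ := fun γ hγ => le_trans (Nat.cast_nonneg T) (hc γ hγ)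
  set q : (Fin n → ℕ) → ℕ := fun γ => ⌊c γ⌋₊ with hqdef
  have hq1 : ∀ γ ∈ S, (q γ : ℝ) ≤ c γ := fun γ hγ => Nat.floor_le (hc0 γ hγ)
  have hq2 : ∀ γ ∈ S, c γ < q γ + 1 := fun γ _ => Nat.lt_floor_add_one _
  have hq3 : ∀ γ ∈ S, T ≤ q γ := fun γ hγ => Nat.le_floor (hc γ hγ)
  set f : Fin n → ℤ := fun j => (u j : ℤ) - ∑ γ ∈ S, (q γ : ℤ) * (γ j : ℤ) with hf
  have hfR : ∀ j, (f j : ℝ) = ∑ γ ∈ S, (c γ - q γ) * (γ j : ℝ) := by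
    intro j
    rw [hf]
    push_cast
    rw [hu j, ← Finset.sum_sub_distrib]
    exact Finset.sum_congr rfl fun γ _ => by ring
  have hfbox : f ∈ Set.univ.pi fun j => Set.Icc (0:ℤ) (M j) := by
    intro j _
    constructor
    · have h1 : (0:ℝ) ≤ (f j : ℝ) := by
        rw [hfR]
        exact Finset.sum_nonneg fun γ hγ =>
          mul_nonneg (by linarith [hq1 γ hγ]) (Nat.cast_nonneg _)
      exact_mod_cast h1
    · have h1 : (f j : ℝ) ≤ (M j : ℝ) := by
        rw [hfR, hM]
        push_cast
        apply Finset.sum_le_sum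
        intro γ hγ
        have h2 : c γ - q γ ≤ 1 := by linarith [hq2 γ hγ]
        nlinarith [Nat.cast_nonneg (α := ℝ) (γ j)]
      exact_mod_cast h1
  have hTb : ∀ γ ∈ S, -(b f γ) ≤ (T : ℤ) := by
    intro γ hγ
    have hA : (-(b f γ)).toNat ≤ S.sup (fun γ' => (-(b f γ')).toNat) :=
      Finset.le_sup (f := fun γ' => (-(b f γ')).toNat) hγ
    have hB : S.sup (fun γ' => (-(b f γ')).toNat) ≤ T :=
      Finset.le_sup (f := fun v => S.sup fun γ' => (-(b v γ')).toNat)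
        (hBox.mem_toFinset.2 hfbox)
    have h1 : (-(b f γ)).toNat ≤ T := le_trans hA hB
    calc -(b f γ) ≤ ((-(b f γ)).toNat : ℤ) := Int.self_le_toNat _
      _ ≤ (T : ℤ) := by exact_mod_cast h1
  set a : (Fin n → ℕ) → ℕ := fun γ => ((q γ : ℤ) + b f γ).toNat with ha
  have haZ : ∀ γ ∈ S, (a γ : ℤ) = (q γ : ℤ) + b f γ := by
    intro γ hγ
    apply Int.toNat_of_nonneg
    have h1 := hTb γ hγ
    have h2 := hq3 γ hγ
    have h3 : (T : ℤ) ≤ (q γ : ℤ) := by exact_mod_cast h2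
    omega
  have huZ : ∀ j, (u j : ℤ) = ∑ γ ∈ S, (a γ : ℤ) * (γ j : ℤ) := by
    intro j
    have h1 := hb f j
    have h2 : (u j : ℤ) = f j + ∑ γ ∈ S, (q γ : ℤ) * (γ j : ℤ) := by rw [hf]; ring
    rw [h2, h1, ← Finset.sum_add_distrib]
    exact Finset.sum_congr rfl fun γ hγ => by rw [haZ γ hγ]; ring
  have husum : u = ∑ γ ∈ S, a γ • γ := by
    funext j
    have h2 : ((∑ γ ∈ S, a γ • γ) j : ℕ) = ∑ γ ∈ S, a γ * γ j := by
      simp [Finset.sum_apply]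
    have h3 : (u j : ℤ) = ((∑ γ ∈ S, a γ • γ) j : ℤ) := by
      rw [huZ j]
      rw [show (((∑ γ ∈ S, a γ • γ) j : ℕ) : ℤ) = ∑ γ ∈ S, (a γ : ℤ) * (γ j : ℤ) by
        rw [h2]; push_cast; rfl]
    exact_mod_cast h3
  rw [husum]
  exact Finset.sum_induction _ (· ∈ Γ) (fun x y hx hy => hadd x hx y hy) h0
    (fun γ hγ => nsmul_mem h0 hadd (hSΓ hγ) (a γ))

lemma coneOf_nonneg {n : ℕ} {Γ : Set (Fin n → ℕ)} {x : Fin n → ℝ} (hx : x ∈ coneOf Γ) :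
    ∀ i, 0 ≤ x i := by
  intro i
  have hsub : coneOf Γ ⊆ {y : Fin n → ℝ | ∀ j, 0 ≤ y j} := by
    apply closure_minimal
    · rintro y ⟨k, c, g, hc, hg, rfl⟩ j
      simp only [Finset.sum_apply, Pi.smul_apply, smul_eq_mul]
      exact Finset.sum_nonneg fun i _ => mul_nonneg (hc i) (Nat.cast_nonneg _)
    · have h1 : {y : Fin n → ℝ | ∀ j, 0 ≤ y j} = ⋂ j, {y : Fin n → ℝ | 0 ≤ y j} := by
        ext y; simp [Set.mem_iInter]
      rw [h1]
      exact isClosed_iInter fun j => isClosed_le continuous_const (continuous_apply j)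
  exact hsub hx i

lemma snoc_mem_interior {d : ℕ} {Γ : Set (Fin (d+1) → ℕ)} {x : Fin d → ℝ}
    (hx : x ∈ interior (deltaOf Γ)) :
    Fin.snoc x (1 : ℝ) ∈ interior (closure (wall Γ)) := by
  obtain ⟨ε, hε, hball⟩ := Metric.isOpen_iff.1 isOpen_interior x hx
  rw [mem_interior_iff_mem_nhds, Metric.mem_nhds_iff]
  set ε' : ℝ := min (1/2) (ε / (2 * (‖x‖ + 1))) with hε'def
  have hε'pos : 0 < ε' := lt_min one_half_pos (by positivity)
  have hε'half : ε' ≤ 1/2 := min_le_left _ _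
  have hε'bnd : ε' ≤ ε / (2 * (‖x‖ + 1)) := min_le_right _ _
  refine ⟨ε', hε'pos, ?_⟩
  intro w hw
  set t : ℝ := w (Fin.last d) with htdef
  set y : Fin d → ℝ := Fin.init w with hydef
  have hwt : |t - 1| < ε' := by
    have h1 := dist_le_pi_dist w (Fin.snoc x (1:ℝ)) (Fin.last d)
    rw [Fin.snoc_last, Real.dist_eq] at h1
    exact lt_of_le_of_lt h1 (Metric.mem_ball.1 hw)
  have hyx : dist y x < ε' := by
    have h1 : dist y x ≤ dist w (Fin.snoc x (1:ℝ)) := by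
      refine (dist_pi_le_iff dist_nonneg).2 fun i => ?_
      have h2 := dist_le_pi_dist w (Fin.snoc x (1:ℝ)) (Fin.castSucc i)
      rwa [Fin.snoc_castSucc] at h2
    exact lt_of_le_of_lt h1 (Metric.mem_ball.1 hw)
  have ht2 : 1/2 ≤ t := by
    rcases abs_lt.1 hwt with ⟨h1, h2⟩
    linarith
  have htpos : 0 < t := by linarith
  set x' : Fin d → ℝ := t⁻¹ • y with hx'def
  have hx'ball : x' ∈ Metric.ball x ε := by
    rw [Metric.mem_ball, dist_eq_norm]
    have h1 : x' - x = t⁻¹ • (y - t • x) := by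
      rw [smul_sub, smul_smul, inv_mul_cancel₀ htpos.ne', one_smul, hx'def]
    rw [h1, norm_smul, Real.norm_eq_abs, abs_of_pos (inv_pos.2 htpos)]
    have h2 : ‖y - t • x‖ ≤ ‖y - x‖ + ‖x - t • x‖ := by
      have h3 : y - t • x = (y - x) + (x - t • x) := by abel
      rw [h3]; exact norm_add_le _ _
    have h4 : ‖x - t • x‖ = |1 - t| * ‖x‖ := by
      rw [show x - t • x = (1 - t) • x by rw [sub_smul, one_smul], norm_smul, Real.norm_eq_abs]
    have h5 : ‖y - x‖ < ε' := by rw [← dist_eq_norm]; exact hyx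
    have h6 : |1 - t| * ‖x‖ ≤ ε' * ‖x‖ := by
      apply mul_le_mul_of_nonneg_right _ (norm_nonneg x)
      rw [abs_sub_comm]; exact hwt.le
    have h7 : t⁻¹ ≤ 2 := by
      rw [inv_le_comm₀ htpos (by norm_num)]
      linarith
    have h8 : ‖y - t • x‖ < ε' * (1 + ‖x‖) := by nlinarith
    have h9 : t⁻¹ * ‖y - t • x‖ ≤ 2 * ‖y - t • x‖ :=
      mul_le_mul_of_nonneg_right h7 (norm_nonneg _)
    have h10 : (0:ℝ) < 1 + ‖x‖ := by positivity
    have h11 : 2 * (ε' * (1 + ‖x‖)) ≤ ε := by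
      have := mul_le_mul_of_nonneg_right hε'bnd (le_of_lt h10)
      calc 2 * (ε' * (1 + ‖x‖)) ≤ 2 * (ε / (2 * (‖x‖ + 1)) * (1 + ‖x‖)) := by nlinarith
        _ = ε := by field_simp; ring
    nlinarith
  have hx'Δ : x' ∈ deltaOf Γ := interior_subset (hball hx'ball)
  have hw_eq : w = t • (Fin.snoc x' (1:ℝ) : Fin (d+1) → ℝ) := by
    funext j
    refine Fin.lastCases ?_ ?_ j
    · rw [Pi.smul_apply, Fin.snoc_last, smul_eq_mul, mul_one, htdef]
    · intro i
      rw [Pi.smul_apply, Fin.snoc_castSucc, smul_eq_mul, hx'def, Pi.smul_apply, smul_eq_mul,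
        ← mul_assoc, mul_inv_cancel₀ htpos.ne', one_mul, hydef]
      rfl
  rw [hw_eq]
  exact smul_mem_closure_wall htpos.le hx'Δ

lemma exists_finset_generators {n : ℕ} (Γ : Set (Fin n → ℕ))
    (hgen : AddSubgroup.closure ((fun γ : Fin n → ℕ => (fun i => (γ i : ℤ))) '' Γ) = ⊤) :
    ∃ SG : Finset (Fin n → ℕ), ↑SG ⊆ Γ ∧
      ∀ v : Fin n → ℤ, ∃ b : (Fin n → ℕ) → ℤ, ∀ j, v j = ∑ γ ∈ SG, b γ * (γ j : ℤ) := by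
  classical
  have hspanZ : ∀ v : Fin n → ℤ, v ∈ Submodule.span ℤ (intVec '' Γ) := by
    intro v
    have h1 : v ∈ AddSubgroup.closure (intVec '' Γ) := by
      have : v ∈ (⊤ : AddSubgroup (Fin n → ℤ)) := trivial
      rwa [← hgen] at this
    rwa [← Submodule.span_int_eq_addSubgroupClosure] at h1
  have hbase : ∀ j : Fin n, ∃ t : Finset (Fin n → ℤ),
      ↑t ⊆ intVec '' Γ ∧ (Pi.single j (1:ℤ) : Fin n → ℤ) ∈ Submodule.span ℤ (↑t : Set (Fin n → ℤ)) :=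
    fun j => Submodule.mem_span_finite_of_mem_span (hspanZ _)
  choose t ht1 ht2 using hbase
  set T : Finset (Fin n → ℤ) := Finset.univ.biUnion t with hTdef
  have hTsub : ↑T ⊆ intVec '' Γ := by
    intro w hw
    obtain ⟨j, _, hj⟩ := Finset.mem_biUnion.1 (by exact_mod_cast hw)
    exact ht1 j hj
  obtain ⟨u, huΓ, huT⟩ := Set.subset_image_iff.1 hTsub
  have hufin : u.Finite :=
    Set.Finite.of_finite_image (by rw [huT]; exact T.finite_toSet) intVec_injective.injOn
  refine ⟨hufin.toFinset, by simpa using huΓ, ?_⟩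
  intro v
  have hvT : v ∈ Submodule.span ℤ (↑T : Set (Fin n → ℤ)) := by
    have hv : v = ∑ j, (Pi.single j (v j) : Fin n → ℤ) := (Finset.univ_sum_single v).symm
    rw [hv]
    refine Submodule.sum_mem _ fun j _ => ?_
    have hsj : (Pi.single j (1:ℤ) : Fin n → ℤ) ∈ Submodule.span ℤ (↑T : Set (Fin n → ℤ)) := by
      refine Submodule.span_mono ?_ (ht2 j)
      exact_mod_cast Finset.coe_subset.2 (Finset.subset_biUnion_of_mem t (Finset.mem_univ j))
    have heq : (Pi.single j (v j) : Fin n → ℤ) = (v j) • (Pi.single j (1:ℤ) : Fin n → ℤ) := by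
      funext i
      simp only [Pi.single_apply, Pi.smul_apply, smul_eq_mul]
      split <;> simp
    rw [heq]
    exact Submodule.smul_mem _ _ hsj
  rw [Submodule.mem_span_finset] at hvT
  obtain ⟨f, -, hf⟩ := hvT
  have himg : hufin.toFinset.image intVec = T := by
    apply Finset.coe_injective
    rw [Finset.coe_image, Set.Finite.coe_toFinset, huT]
  refine ⟨fun γ => f (intVec γ), fun j => ?_⟩
  rw [← himg, Finset.sum_image (fun a _ b _ h => intVec_injective h)] at hf
  have := congrFun hf j
  simp only [Finset.sum_apply, Pi.smul_apply, smul_eq_mul] at this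
  rw [← this]
  rfl

end KhAux

/-- For any compact convex `D` contained in the interior of `Δ(Γ)`, there is `m₀` such that
for all `m > m₀`, `D ∩ Λ_m(Γ) = D ∩ (1/m)ℤ^d`. -/
theorem lattice_points_in_interior (d : ℕ) (hd : 1 ≤ d) (Γ : Set (Fin (d+1) → ℕ))
    (h0 : (0 : Fin (d+1) → ℕ) ∈ Γ)
    (hadd : ∀ x ∈ Γ, ∀ y ∈ Γ, x + y ∈ Γ)
    (hgen : AddSubgroup.closure
        ((fun γ : Fin (d+1) → ℕ => (fun i => (γ i : ℤ))) '' Γ) = ⊤)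
    (D : Set (Fin d → ℝ)) (hDc : IsCompact D) (hDconv : Convex ℝ D)
    (hD : D ⊆ interior (deltaOf Γ)) :
    ∃ m₀ : ℕ, 0 < m₀ ∧ ∀ m : ℕ, m₀ < m →
      D ∩ lambdaOf Γ m = D ∩ { x : Fin d → ℝ | ∀ i, ∃ k : ℤ, x i = (k : ℝ) / (m : ℝ) } := by
  classical
  rcases D.eq_empty_or_nonempty with hDe | hDne
  · exact ⟨1, one_pos, fun m _ => by rw [hDe, Set.empty_inter, Set.empty_inter]⟩
  have hnn : ∀ x ∈ D, ∀ i, 0 ≤ x i := by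
    intro x hx i
    have h1' : x ∈ deltaOf Γ := interior_subset (hD hx)
    have h1 : (Fin.snoc x (1:ℝ) : Fin (d+1) → ℝ) ∈ coneOf Γ := h1'
    have h2 := KhAux.coneOf_nonneg h1 (Fin.castSucc i)
    rwa [Fin.snoc_castSucc] at h2
  obtain ⟨SG, hSGΓ, hSGspan⟩ := KhAux.exists_finset_generators Γ hgen
  have hgeo : ∀ x ∈ D, ∃ S : Finset (Fin (d+1) → ℕ), ↑S ⊆ Γ ∧ ∃ ρ : ℝ, 0 < ρ ∧
      Metric.ball (Fin.snoc x (1:ℝ) : Fin (d+1) → ℝ) ρ ⊆ KhAux.wcone S := fun x hx =>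
    KhAux.exists_wcone_ball (KhAux.mem_interior_wall (KhAux.snoc_mem_interior (hD hx)))
  choose! Sx hSxΓ ρx hρx hballx using hgeo
  obtain ⟨tf, htf⟩ := hDc.elim_finite_subcover
    (fun p : D => Metric.ball (p : Fin d → ℝ) (ρx p / 2))
    (fun p => Metric.isOpen_ball)
    (fun x hx => Set.mem_iUnion.2 ⟨⟨x, hx⟩, Metric.mem_ball_self (half_pos (hρx x hx))⟩)
  obtain ⟨x₀, hx₀⟩ := hDne
  have htfne : tf.Nonempty := by
    have h1 := htf hx₀
    simp only [Set.mem_iUnion] at h1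
    obtain ⟨p, hp, _⟩ := h1
    exact ⟨p, hp⟩
  set S1 : Finset (Fin (d+1) → ℕ) := tf.biUnion (fun p => Sx (p : Fin d → ℝ)) with hS1def
  set r : ℝ := tf.inf' htfne (fun p => ρx (p : Fin d → ℝ) / 2) with hrdef
  have hrpos : 0 < r := by
    rw [hrdef, Finset.lt_inf'_iff]
    exact fun p hp => half_pos (hρx _ p.2)
  have hballS1 : ∀ x ∈ D, Metric.ball (Fin.snoc x (1:ℝ) : Fin (d+1) → ℝ) r ⊆ KhAux.wcone S1 := by
    intro x hx z hz
    have h1 := htf hx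
    simp only [Set.mem_iUnion] at h1
    obtain ⟨p, hp, hxp⟩ := h1
    refine KhAux.wcone_mono
      (Finset.subset_biUnion_of_mem (fun p : D => Sx (p : Fin d → ℝ)) hp) ?_
    apply hballx (p : Fin d → ℝ) p.2
    rw [Metric.mem_ball]
    have hd1 : dist (Fin.snoc x (1:ℝ) : Fin (d+1) → ℝ) (Fin.snoc ((p : Fin d → ℝ)) (1:ℝ))
        ≤ dist x (p : Fin d → ℝ) := by
      refine (dist_pi_le_iff dist_nonneg).2 fun j => ?_
      refine Fin.lastCases ?_ ?_ j
      · rw [Fin.snoc_last, Fin.snoc_last, dist_self]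
        exact dist_nonneg
      · intro i
        rw [Fin.snoc_castSucc, Fin.snoc_castSucc]
        exact dist_le_pi_dist _ _ i
    have h2 := dist_triangle z (Fin.snoc x (1:ℝ) : Fin (d+1) → ℝ) (Fin.snoc ((p : Fin d → ℝ)) (1:ℝ))
    have h3 : dist z (Fin.snoc x (1:ℝ) : Fin (d+1) → ℝ) < r := Metric.mem_ball.1 hz
    have h4 : dist x (p : Fin d → ℝ) < ρx (p : Fin d → ℝ) / 2 := Metric.mem_ball.1 hxp
    have h5 : r ≤ ρx (p : Fin d → ℝ) / 2 := Finset.inf'_le _ hp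
    linarith
  set S : Finset (Fin (d+1) → ℕ) := S1 ∪ SG with hSdef
  have hSΓ : ↑S ⊆ Γ := by
    intro γ hγ
    rcases Finset.mem_union.1 (by exact_mod_cast hγ) with h | h
    · rcases Finset.mem_biUnion.1 h with ⟨p, hp, hγ'⟩
      exact hSxΓ _ p.2 hγ'
    · exact hSGΓ h
  have hspanS : ∀ v : Fin (d+1) → ℤ, ∃ b : (Fin (d+1) → ℕ) → ℤ,
      ∀ j, v j = ∑ γ ∈ S, b γ * (γ j : ℤ) := by
    intro v
    obtain ⟨b, hb⟩ := hSGspan v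
    refine ⟨fun γ => if γ ∈ SG then b γ else 0, fun j => ?_⟩
    rw [hb j, ← Finset.sum_subset (Finset.subset_union_right : SG ⊆ S)
      (fun γ _ hγ => by simp [hγ])]
    exact Finset.sum_congr rfl fun γ hγ => by simp [hγ]
  have hballS : ∀ x ∈ D, Metric.ball (Fin.snoc x (1:ℝ) : Fin (d+1) → ℝ) r ⊆ KhAux.wcone S :=
    fun x hx => (hballS1 x hx).trans (KhAux.wcone_mono Finset.subset_union_left)
  obtain ⟨T, hTkey⟩ := KhAux.key Γ h0 hadd S hSΓ hspanS
  set gv : Fin (d+1) → ℝ := ∑ γ ∈ S, natVecR γ with hgvdef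
  set Ng : ℝ := ‖gv‖ with hNgdef
  have hNg0 : 0 ≤ Ng := norm_nonneg _
  set m₀ : ℕ := ⌈((T:ℝ) * (Ng + 1)) / r⌉₊ + 1 with hm₀def
  refine ⟨m₀, Nat.succ_pos _, ?_⟩
  intro m hm
  have hmpos : 0 < m := lt_trans (Nat.succ_pos _) hm
  have hmR : (0:ℝ) < m := by exact_mod_cast hmpos
  have hmbig : (T:ℝ) * (Ng + 1) < m * r := by
    have h1 : ((T:ℝ) * (Ng + 1)) / r ≤ (⌈((T:ℝ) * (Ng + 1)) / r⌉₊ : ℝ) := Nat.le_ceil _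
    have h2 : (⌈((T:ℝ) * (Ng + 1)) / r⌉₊ : ℝ) + 2 ≤ (m:ℝ) := by
      have h3 : m₀ + 1 ≤ m := hm
      have h4 : (⌈((T:ℝ) * (Ng + 1)) / r⌉₊ + 2 : ℕ) ≤ m := by omega
      exact_mod_cast h4
    have h5 : ((T:ℝ) * (Ng + 1)) / r < (m:ℝ) := by linarith
    rw [div_lt_iff₀ hrpos] at h5
    linarith
  ext z
  simp only [Set.mem_inter_iff, Set.mem_setOf_eq, lambdaOf]
  constructor
  · rintro ⟨hzD, β, hβ, hβΓ⟩
    exact ⟨hzD, fun i => ⟨(β i : ℤ), by rw [hβ]; simp⟩⟩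
  · rintro ⟨hzD, hk⟩
    choose k hk using hk
    have hk0 : ∀ i, 0 ≤ k i := by
      intro i
      have h1 : 0 ≤ z i := hnn z hzD i
      rw [hk i] at h1
      have h2 : (0:ℝ) ≤ (k i : ℝ) := by
        by_contra hcon
        push_neg at hcon
        have h3 : (k i : ℝ) / m < 0 := div_neg_of_neg_of_pos hcon hmR
        linarith
      exact_mod_cast h2
    set β : Fin d → ℕ := fun i => (k i).toNat with hβdef
    have hβR : ∀ i, (β i : ℝ) = (k i : ℝ) := by
      intro i
      rw [hβdef]
      dsimp only
      rw [← Int.cast_natCast, Int.toNat_of_nonneg (hk0 i)]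
    refine ⟨hzD, β, funext fun i => by rw [hk i, hβR i], ?_⟩
    set u : Fin (d+1) → ℕ := Fin.snoc β m with hudef
    have huR : ∀ j, (u j : ℝ) = (m:ℝ) * (Fin.snoc z (1:ℝ) : Fin (d+1) → ℝ) j := by
      intro j
      refine Fin.lastCases ?_ ?_ j
      · rw [hudef, Fin.snoc_last, Fin.snoc_last, mul_one]
      · intro i
        rw [hudef, Fin.snoc_castSucc, Fin.snoc_castSucc, hβR i, hk i]
        field_simp
    set y : Fin (d+1) → ℝ := (Fin.snoc z (1:ℝ) : Fin (d+1) → ℝ) - ((T:ℝ)/m) • gv with hydef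
    have hyball : y ∈ Metric.ball (Fin.snoc z (1:ℝ) : Fin (d+1) → ℝ) r := by
      rw [Metric.mem_ball, dist_eq_norm, hydef, sub_sub_cancel_left, norm_neg, norm_smul,
        Real.norm_eq_abs, abs_of_nonneg (by positivity), ← hNgdef]
      rw [div_mul_eq_mul_div, div_lt_iff₀ hmR]
      have hT0 : (0:ℝ) ≤ T := Nat.cast_nonneg _
      nlinarith
    obtain ⟨c, hc, hyeq⟩ := hballS z hzD hyball
    apply hTkey u (fun γ => (m:ℝ) * c γ + T)
    · intro γ _
      have h1 := hc γ
      nlinarith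
    · intro j
      rw [huR j]
      have hyj : y j = ∑ γ ∈ S, c γ * (γ j : ℝ) := by
        have h1 := congrFun hyeq j
        simpa [Finset.sum_apply, natVecR] using h1
      have hgvj : gv j = ∑ γ ∈ S, (γ j : ℝ) := by
        rw [hgvdef]
        simp [Finset.sum_apply, natVecR]
      have hsz : (Fin.snoc z (1:ℝ) : Fin (d+1) → ℝ) j = y j + ((T:ℝ)/m) * gv j := by
        rw [hydef]
        simp only [Pi.sub_apply, Pi.smul_apply, smul_eq_mul]
        ring
      rw [hsz]
      calc (m:ℝ) * (y j + ((T:ℝ)/m) * gv j) = (m:ℝ) * y j + (T:ℝ) * gv j := by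
            field_simp
          _ = (∑ γ ∈ S, (m:ℝ) * (c γ * (γ j:ℝ))) + ∑ γ ∈ S, (T:ℝ) * (γ j:ℝ) := by
            rw [hyj, hgvj, Finset.mul_sum, Finset.mul_sum]
          _ = ∑ γ ∈ S, ((m:ℝ) * c γ + T) * (γ j:ℝ) := by
            rw [← Finset.sum_add_distrib]
            exact Finset.sum_congr rfl fun γ _ => by ring
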